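/- Let ι be a finite index set, a : ι → ℝ^n a family of vectors, b : ι → ℝ, and P = {x ∈ ℝ^n : ∀ i ∈ ι, ⟪a_i, x⟫ ≥ b_i} where ⟪·,·⟫ is the standard inner product. If x is an extreme point of P, then the set of tight constraint normals {a_i : ⟪a_i, x⟫ = b_i} spans ℝ^n. -/

import Mathlib

/-- **Tight constraints at an extreme point span the whole space.** If `x` is an extreme
point of the polyhedron `P = {x : ℝⁿ | ∀ i, ⟪a i, x⟫ ≥ b i}`, then the normals `a i` of the
constraints that are tight at `x` span `ℝⁿ`. -/
theorem extremePoint_tight_normals_span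
    (n : ℕ) (ι : Type) [Fintype ι]
    (a : ι → EuclideanSpace ℝ (Fin n)) (b : ι → ℝ)
    (P : Set (EuclideanSpace ℝ (Fin n)))
    (hP : P = {x | ∀ i : ι, b i ≤ (inner ℝ (a i) x : ℝ)})
    (x : EuclideanSpace ℝ (Fin n)) (hx : x ∈ Set.extremePoints ℝ P) :
    Submodule.span ℝ {v : EuclideanSpace ℝ (Fin n) |
      ∃ i : ι, (inner ℝ (a i) x : ℝ) = b i ∧ v = a i} = ⊤ := by
  by_contra hspan
  set S := Submodule.span ℝ {v : EuclideanSpace ℝ (Fin n) |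
      ∃ i : ι, (inner ℝ (a i) x : ℝ) = b i ∧ v = a i} with hS
  have horth : Sᗮ ≠ ⊥ := by
    intro h
    exact hspan ((Submodule.orthogonal_eq_bot_iff).mp h)
  obtain ⟨w, hwS, hw0⟩ := Submodule.exists_mem_ne_zero_of_ne_bot horth
  -- for tight constraints, ⟪a i, w⟫ = 0
  have htight : ∀ i : ι, (inner ℝ (a i) x : ℝ) = b i → (inner ℝ (a i) w : ℝ) = 0 := by
    intro i hi
    have hai : a i ∈ S := Submodule.subset_span ⟨i, hi, rfl⟩
    exact (Submodule.mem_orthogonal S w).mp hwS (a i) hai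
  -- choose ε > 0
  classical
  set c : ι → ℝ := fun i =>
    if (inner ℝ (a i) x : ℝ) = b i then 1
    else ((inner ℝ (a i) x : ℝ) - b i) / (|(inner ℝ (a i) w : ℝ)| + 1) with hc
  have hxP : x ∈ P := hx.1
  have hxP' : ∀ i : ι, b i ≤ (inner ℝ (a i) x : ℝ) := by rw [hP] at hxP; exact hxP
  have hcpos : ∀ i, 0 < c i := by
    intro i
    rw [hc]
    by_cases h : (inner ℝ (a i) x : ℝ) = b i
    · simp [h]
    · simp only [h, if_false]
      apply div_pos
      · have := hxP' i; linarith [lt_of_le_of_ne this (fun he => h he.symm)]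
      · positivity
  set F : Finset ℝ := Finset.univ.image c ∪ {1} with hF
  have hFne : F.Nonempty := ⟨1, by simp [hF]⟩
  set ε : ℝ := F.min' hFne with hε
  have hεpos : 0 < ε := by
    have hmm : ε ∈ F := F.min'_mem hFne
    rw [hF] at hmm
    rcases Finset.mem_union.mp hmm with h | h
    · obtain ⟨i, _, hi⟩ := Finset.mem_image.mp h
      rw [← hi]; exact hcpos i
    · rw [Finset.mem_singleton.mp h]; norm_num
  have hεle : ∀ i, ε ≤ c i := by
    intro i
    apply Finset.min'_le
    rw [hF]
    exact Finset.mem_union_left _ (Finset.mem_image.mpr ⟨i, Finset.mem_univ i, rfl⟩)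
  -- both perturbations are in P
  have key : ∀ i : ι, |ε * (inner ℝ (a i) w : ℝ)| ≤ (inner ℝ (a i) x : ℝ) - b i := by
    intro i
    by_cases h : (inner ℝ (a i) x : ℝ) = b i
    · simp [htight i h, h]
    · have hs : 0 < (inner ℝ (a i) x : ℝ) - b i := by
        have := hxP' i; linarith [lt_of_le_of_ne this (fun he => h he.symm)]
      have h1 : |ε * (inner ℝ (a i) w : ℝ)| = ε * |(inner ℝ (a i) w : ℝ)| := by
        rw [abs_mul, abs_of_pos hεpos]
      rw [h1]
      have h2 : ε ≤ ((inner ℝ (a i) x : ℝ) - b i) / (|(inner ℝ (a i) w : ℝ)| + 1) := by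
        have h3 := hεle i
        simp only [hc] at h3
        rwa [if_neg h] at h3
      calc ε * |(inner ℝ (a i) w : ℝ)|
          ≤ (((inner ℝ (a i) x : ℝ) - b i) / (|(inner ℝ (a i) w : ℝ)| + 1)) *
              |(inner ℝ (a i) w : ℝ)| := by
            apply mul_le_mul_of_nonneg_right h2 (abs_nonneg _)
        _ ≤ (inner ℝ (a i) x : ℝ) - b i := by
            rw [div_mul_eq_mul_div, div_le_iff₀ (by positivity)]
            nlinarith [abs_nonneg ((inner ℝ (a i) w : ℝ))]
  have hmem : ∀ s : ℝ, |s| ≤ 1 → x + (s * ε) • w ∈ P := by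
    intro s hs
    rw [hP]
    intro i
    have hinner : (inner ℝ (a i) (x + (s * ε) • w) : ℝ)
        = (inner ℝ (a i) x : ℝ) + (s * ε) * (inner ℝ (a i) w : ℝ) := by
      rw [inner_add_right, real_inner_smul_right]
    have habs : |(s * ε) * (inner ℝ (a i) w : ℝ)| ≤ (inner ℝ (a i) x : ℝ) - b i := by
      calc |(s * ε) * (inner ℝ (a i) w : ℝ)| = |s| * |ε * (inner ℝ (a i) w : ℝ)| := by
            rw [mul_assoc, abs_mul]
        _ ≤ 1 * |ε * (inner ℝ (a i) w : ℝ)| := by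
            apply mul_le_mul_of_nonneg_right hs (abs_nonneg _)
        _ = |ε * (inner ℝ (a i) w : ℝ)| := one_mul _
        _ ≤ (inner ℝ (a i) x : ℝ) - b i := key i
    have := neg_abs_le ((s * ε) * (inner ℝ (a i) w : ℝ))
    rw [hinner]
    linarith
  have hy : x + ε • w ∈ P := by
    have := hmem 1 (by norm_num)
    simpa using this
  have hz : x - ε • w ∈ P := by
    have := hmem (-1) (by norm_num)
    have h : x + ((-1 : ℝ) * ε) • w = x - ε • w := by
      rw [neg_one_mul, neg_smul]; abel
    rwa [h] at this
  have hopen : x ∈ openSegment ℝ (x + ε • w) (x - ε • w) := by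
    refine ⟨1/2, 1/2, by norm_num, by norm_num, by norm_num, ?_⟩
    module
  have := hx.2 hy hz hopen
  apply hw0
  have : ε • w = 0 := by
    have h := this
    nth_rewrite 2 [show x = x + (0 : EuclideanSpace ℝ (Fin n)) by simp] at h
    exact add_left_cancel h
  exact (smul_eq_zero.mp this).resolve_left (ne_of_gt hεpos)
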